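/- For every n ≥ 1, the variance of the Gepner statistic over all permutations of {1,…,n} equals n²(n−1)(n−2)/72; that is, (1/n!) Σ_{π ∈ S_n} (gep(π) − n(n−1)(n−2)/12)² = n²(n−1)(n−2)/72 (as an identity in ℚ). -/

import Mathlib

/-- The Gepner statistic of a word `w = w 0 … w (m-1)` over a totally ordered
alphabet: the number of triples of positions `i < j < k` such that
`w_i w_j w_k` reduces to one of the odd permutations `132`, `213`, `321`. -/
def gep {m : ℕ} {α : Type*} [LinearOrder α] (w : Fin m → α) : ℕ :=
  (Finset.univ.filter (fun t : Fin m × Fin m × Fin m =>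
    t.1 < t.2.1 ∧ t.2.1 < t.2.2 ∧
      ((w t.1 < w t.2.2 ∧ w t.2.2 < w t.2.1) ∨
       (w t.2.1 < w t.1 ∧ w t.1 < w t.2.2) ∨
       (w t.2.2 < w t.2.1 ∧ w t.2.1 < w t.1)))).card

open Finset

def GVPat {α : Type*} [LinearOrder α] (a b c : α) : Prop :=
  (a < c ∧ c < b) ∨ (b < a ∧ a < c) ∨ (c < b ∧ b < a)

instance {α : Type*} [LinearOrder α] (a b c : α) : Decidable (GVPat a b c) := by
  unfold GVPat; infer_instance

def GVsg {α : Type*} [LinearOrder α] (a b c : α) : ℚ := if GVPat a b c then -1 else 1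

def GVsgz {α : Type*} [LinearOrder α] (a b c : α) : ℤ := if GVPat a b c then -1 else 1

lemma GVsg_eq_cast {α : Type*} [LinearOrder α] (a b c : α) :
    GVsg a b c = ((GVsgz a b c : ℤ) : ℚ) := by
  unfold GVsg GVsgz; split <;> norm_num

lemma GVsg_mul_self {α : Type*} [LinearOrder α] (a b c : α) :
    GVsg a b c * GVsg a b c = 1 := by
  unfold GVsg; split <;> norm_num

lemma GVind_eq {α : Type*} [LinearOrder α] (a b c : α) :
    (if GVPat a b c then (1:ℚ) else 0) = (1 - GVsg a b c)/2 := by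
  unfold GVsg; split <;> norm_num

lemma GVPat_congr {α β : Type*} [LinearOrder α] [LinearOrder β]
    {x1 x2 x3 : α} {y1 y2 y3 : β}
    (h : ∀ (i j : Fin 3), (if i = 0 then x1 else if i = 1 then x2 else x3) <
        (if j = 0 then x1 else if j = 1 then x2 else x3) ↔
        (if i = 0 then y1 else if i = 1 then y2 else y3) <
        (if j = 0 then y1 else if j = 1 then y2 else y3)) :
    GVPat x1 x2 x3 ↔ GVPat y1 y2 y3 := by
  have h13 := h 0 2; have h21 := h 1 0; have h32 := h 2 1
  have h31 := h 2 0; have h12 := h 0 1; have h23 := h 1 2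
  simp only [show (0:Fin 3) ≠ 1 by decide, show (2:Fin 3) ≠ 0 by decide,
    show (2:Fin 3) ≠ 1 by decide, show (1:Fin 3) ≠ 0 by decide,
    if_true, if_false, reduceIte] at h13 h21 h32 h31 h12 h23
  unfold GVPat
  rw [h13, h21, h32]

-- sign flips under swapping two arguments, Fin version (distinctness needed)
lemma GVsg_swap12 {N : ℕ} {a b c : Fin N} (h1 : a ≠ b) (h2 : a ≠ c) (h3 : b ≠ c) :
    GVsg b a c = -GVsg a b c := by
  have key : GVPat b a c ↔ ¬ GVPat a b c := by
    simp only [GVPat, Fin.lt_def, ne_eq, Fin.ext_iff] at *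
    omega
  unfold GVsg
  by_cases hp : GVPat a b c <;> simp [key, hp]

lemma GVsg_swap13 {N : ℕ} {a b c : Fin N} (h1 : a ≠ b) (h2 : a ≠ c) (h3 : b ≠ c) :
    GVsg c b a = -GVsg a b c := by
  have key : GVPat c b a ↔ ¬ GVPat a b c := by
    simp only [GVPat, Fin.lt_def, ne_eq, Fin.ext_iff] at *
    omega
  unfold GVsg
  by_cases hp : GVPat a b c <;> simp [key, hp]

lemma GVsg_swap23 {N : ℕ} {a b c : Fin N} (h1 : a ≠ b) (h2 : a ≠ c) (h3 : b ≠ c) :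
    GVsg a c b = -GVsg a b c := by
  have key : GVPat a c b ↔ ¬ GVPat a b c := by
    simp only [GVPat, Fin.lt_def, ne_eq, Fin.ext_iff] at *
    omega
  unfold GVsg
  by_cases hp : GVPat a b c <;> simp [key, hp]

lemma GV.exists_rank {k n : ℕ} (v : Fin k → Fin n) (hv : Function.Injective v) :
    ∃ σ : Equiv.Perm (Fin k), ∀ x y, σ x < σ y ↔ v x < v y := by
  set r : Fin k → Fin k := fun x =>
    ⟨(univ.filter (fun y => v y < v x)).card, by
      have hsub : (univ.filter (fun y => v y < v x)) ⊆ univ.erase x := by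
        intro y hy
        simp only [mem_filter, mem_univ, true_and] at hy
        exact Finset.mem_erase.2 ⟨fun h => absurd hy (by simp [h]), mem_univ y⟩
      have := Finset.card_le_card hsub
      have h2 : (univ.erase x).card < Fintype.card (Fin k) :=
        Finset.card_erase_lt_of_mem (mem_univ x)
      simpa [Fintype.card_fin] using lt_of_le_of_lt this h2⟩ with hr
  have hmono : ∀ x y, v x < v y → r x < r y := by
    intro x y hxy
    have hss : (univ.filter (fun z => v z < v x)) ⊂ (univ.filter (fun z => v z < v y)) := by
      constructor
      · intro z hz
        simp only [mem_filter, mem_univ, true_and] at hz ⊢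
        exact hz.trans hxy
      · intro hsub
        have : x ∈ univ.filter (fun z => v z < v x) := hsub (by simp [hxy])
        simp at this
    exact Finset.card_lt_card hss
  have hiff : ∀ x y, r x < r y ↔ v x < v y := by
    intro x y
    refine ⟨fun h => ?_, hmono x y⟩
    rcases lt_trichotomy (v x) (v y) with h1 | h1 | h1
    · exact h1
    · exact absurd (hv h1) (fun he => by simp [he] at h)
    · exact absurd (hmono y x h1) (fun h2 => by omega)
  have hinj : Function.Injective r := by
    intro x y hxy
    by_contra hne
    rcases lt_or_gt_of_ne (fun he : v x = v y => hne (hv he)) with h | h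
    · have := hmono x y h; rw [hxy] at this; exact lt_irrefl _ this
    · have := hmono y x h; rw [hxy] at this; exact lt_irrefl _ this
  refine ⟨Equiv.ofBijective r ((Finite.injective_iff_bijective).1 hinj), fun x y => ?_⟩
  simpa using hiff x y

lemma GV.master {n k : ℕ} (e : Fin k → Fin n) (he : Function.Injective e)
    (g : (Fin k → Fin n) → ℚ) (h : (Fin k → Fin k) → ℚ)
    (H : ∀ (σ : Equiv.Perm (Fin k)) (v : Fin k → Fin n), Function.Injective v →
      (∀ x y, σ x < σ y ↔ v x < v y) → g v = h ⇑σ) :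
    (Nat.factorial k : ℚ) * ∑ π : Equiv.Perm (Fin n), g (fun m => π (e m)) =
    (Nat.factorial n : ℚ) * ∑ σ : Equiv.Perm (Fin k), h ⇑σ := by
  have hcard : ∀ m : ℕ, (Fintype.card (Equiv.Perm (Fin m)) : ℚ) = Nat.factorial m := by
    intro m; rw [Fintype.card_perm, Fintype.card_fin]
  calc (Nat.factorial k : ℚ) * ∑ π : Equiv.Perm (Fin n), g (fun m => π (e m))
      = ∑ τ : Equiv.Perm (Fin k), ∑ π : Equiv.Perm (Fin n), g (fun m => π (e (τ m))) := by
        have key : ∀ τ : Equiv.Perm (Fin k),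
            (∑ π : Equiv.Perm (Fin n), g (fun m => π (e (τ m)))) =
            ∑ π : Equiv.Perm (Fin n), g (fun m => π (e m)) := by
          intro τ
          refine Fintype.sum_equiv (Equiv.mulRight (τ.viaFintypeEmbedding ⟨e, he⟩)) _ _
            (fun π => ?_)
          congr 1
          funext m
          show π (e (τ m)) = (π * τ.viaFintypeEmbedding ⟨e, he⟩) (e m)
          rw [Equiv.Perm.mul_apply]
          congr 1
          exact (Equiv.Perm.viaFintypeEmbedding_apply_image τ ⟨e, he⟩ m).symm
        rw [Finset.sum_congr rfl (fun τ _ => key τ), Finset.sum_const, nsmul_eq_mul,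
          Finset.card_univ, Fintype.card_perm, Fintype.card_fin]
    _ = ∑ π : Equiv.Perm (Fin n), ∑ τ : Equiv.Perm (Fin k), g (fun m => π (e (τ m))) :=
        Finset.sum_comm
    _ = ∑ π : Equiv.Perm (Fin n), ∑ σ : Equiv.Perm (Fin k), h ⇑σ := by
        refine Finset.sum_congr rfl (fun π _ => ?_)
        have hv : Function.Injective (fun m => π (e m)) := fun a b hab => he (π.injective hab)
        obtain ⟨σ₀, hσ₀⟩ := GV.exists_rank _ hv
        have : ∀ τ : Equiv.Perm (Fin k), g (fun m => π (e (τ m))) = h ⇑(σ₀ * τ) := by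
          intro τ
          refine H (σ₀ * τ) _ (fun a b hab => τ.injective (he (π.injective hab))) ?_
          intro x y
          simpa using hσ₀ (τ x) (τ y)
        rw [Finset.sum_congr rfl (fun τ _ => this τ)]
        exact Fintype.sum_equiv (Equiv.mulLeft σ₀) _ _ (fun τ => rfl)
    _ = (Nat.factorial n : ℚ) * ∑ σ : Equiv.Perm (Fin k), h ⇑σ := by
        rw [Finset.sum_const, nsmul_eq_mul, Finset.card_univ, Fintype.card_perm,
          Fintype.card_fin]

lemma nat_choose3 (m : ℕ) : 6 * m.choose 3 = m * (m - 1) * (m - 2) := by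
  have h := Nat.choose_eq_descFactorial_div_factorial m 3
  have hd := Nat.factorial_dvd_descFactorial m 3
  rw [h]
  rw [show Nat.factorial 3 = 6 from rfl] at hd ⊢
  rw [Nat.mul_div_cancel' hd]
  simp [Nat.descFactorial]
  ring

lemma nat_choose4 (m : ℕ) : 24 * m.choose 4 = m * (m - 1) * (m - 2) * (m - 3) := by
  have h := Nat.choose_eq_descFactorial_div_factorial m 4
  have hd := Nat.factorial_dvd_descFactorial m 4
  rw [h]
  rw [show Nat.factorial 4 = 24 from rfl] at hd ⊢
  rw [Nat.mul_div_cancel' hd]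
  simp [Nat.descFactorial]
  ring

lemma choose3_cast (n : ℕ) :
    ((n.choose 3 : ℕ) : ℚ) = (n : ℚ) * ((n : ℚ) - 1) * ((n : ℚ) - 2) / 6 := by
  match n with
  | 0 => norm_num
  | 1 => norm_num [Nat.choose]
  | 2 => norm_num [Nat.choose]
  | (m + 3) =>
    have h := nat_choose3 (m + 3)
    rw [show m + 3 - 1 = m + 2 by omega, show m + 3 - 2 = m + 1 by omega] at h
    have key : (6 : ℚ) * ((m+3).choose 3 : ℚ) = ((m:ℚ)+3) * ((m:ℚ)+2) * ((m:ℚ)+1) := by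
      exact_mod_cast congrArg (fun x : ℕ => (x : ℚ)) h
    push_cast
    rw [eq_div_iff (by norm_num : (6:ℚ) ≠ 0)]
    linear_combination key

lemma choose4_cast (n : ℕ) :
    ((n.choose 4 : ℕ) : ℚ) =
      (n : ℚ) * ((n : ℚ) - 1) * ((n : ℚ) - 2) * ((n : ℚ) - 3) / 24 := by
  match n with
  | 0 => norm_num
  | 1 => norm_num [Nat.choose]
  | 2 => norm_num [Nat.choose]
  | 3 => norm_num [Nat.choose]
  | (m + 4) =>
    have h := nat_choose4 (m + 4)
    rw [show m + 4 - 1 = m + 3 by omega, show m + 4 - 2 = m + 2 by omega,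
      show m + 4 - 3 = m + 1 by omega] at h
    have key : (24 : ℚ) * ((m+4).choose 4 : ℚ) =
        ((m:ℚ)+4) * ((m:ℚ)+3) * ((m:ℚ)+2) * ((m:ℚ)+1) := by
      exact_mod_cast congrArg (fun x : ℕ => (x : ℚ)) h
    push_cast
    rw [eq_div_iff (by norm_num : (24:ℚ) ≠ 0)]
    linear_combination key

variable {n : ℕ}

def T3 (n : ℕ) : Finset (Fin n × Fin n × Fin n) :=
  univ.filter fun t => t.1 < t.2.1 ∧ t.2.1 < t.2.2
def T4 (n : ℕ) : Finset (Fin n × Fin n × Fin n × Fin n) :=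
  univ.filter fun q => q.1 < q.2.1 ∧ q.2.1 < q.2.2.1 ∧ q.2.2.1 < q.2.2.2
def tset (t : Fin n × Fin n × Fin n) : Finset (Fin n) := {t.1, t.2.1, t.2.2}
lemma mem_T3_iff {t : Fin n × Fin n × Fin n} :
    t ∈ T3 n ↔ t.1 < t.2.1 ∧ t.2.1 < t.2.2 := by simp [T3]
lemma mem_T4_iff {q : Fin n × Fin n × Fin n × Fin n} :
    q ∈ T4 n ↔ q.1 < q.2.1 ∧ q.2.1 < q.2.2.1 ∧ q.2.2.1 < q.2.2.2 := by simp [T4]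
def sel3 (t : Fin n × Fin n × Fin n) : Fin 3 → Fin n :=
  fun m => if m = 0 then t.1 else if m = 1 then t.2.1 else t.2.2
def sel4 (q : Fin n × Fin n × Fin n × Fin n) : Fin 4 → Fin n :=
  fun m => if m = 0 then q.1 else if m = 1 then q.2.1 else if m = 2 then q.2.2.1 else q.2.2.2
lemma sel3_strictMono {t : Fin n × Fin n × Fin n} (h : t ∈ T3 n) : StrictMono (sel3 t) := by
  rw [mem_T3_iff] at h
  intro x y hxy
  fin_cases x <;> fin_cases y <;>
    simp_all [sel3] <;> first | exact h.1 | exact h.2 | exact h.1.trans h.2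
lemma sel4_strictMono {q : Fin n × Fin n × Fin n × Fin n} (h : q ∈ T4 n) :
    StrictMono (sel4 q) := by
  rw [mem_T4_iff] at h
  obtain ⟨h1, h2, h3⟩ := h
  intro x y hxy
  fin_cases x <;> fin_cases y <;>
    simp_all [sel4] <;>
    first | exact h1 | exact h2 | exact h3 | exact h1.trans h2 | exact h2.trans h3 |
      exact (h1.trans h2).trans h3
lemma tset_eq_image (t : Fin n × Fin n × Fin n) :
    tset t = Finset.image (sel3 t) univ := by
  ext x
  simp [tset, sel3]
  constructor
  · rintro (h | h | h)
    · exact ⟨0, by simp [h.symm]⟩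
    · exact ⟨1, by simp [h.symm]⟩
    · exact ⟨2, by simp [h.symm]⟩
  · rintro ⟨m, hm⟩
    fin_cases m <;> simp_all
lemma card_tset {t : Fin n × Fin n × Fin n} (h : t ∈ T3 n) : (tset t).card = 3 := by
  rw [tset_eq_image, Finset.card_image_of_injective _ (sel3_strictMono h).injective]
  simp

def app3 (f : Fin 4 → Fin n) (A : Fin 4 × Fin 4 × Fin 4) : Fin n × Fin n × Fin n :=
  (f A.1, f A.2.1, f A.2.2)

lemma tset_app3 (f : Fin 4 → Fin n) (A : Fin 4 × Fin 4 × Fin 4) :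
    tset (app3 f A) = (tset A).image f := by
  ext x
  simp [tset, app3]

def Fcfg : Finset ((Fin 4 × Fin 4 × Fin 4) × (Fin 4 × Fin 4 × Fin 4)) :=
  ((T3 4) ×ˢ (T3 4)).filter fun p => tset p.1 ∪ tset p.2 = Finset.univ

def phi (x : (Fin n × Fin n × Fin n × Fin n) × ((Fin 4 × Fin 4 × Fin 4) × (Fin 4 × Fin 4 × Fin 4))) :
    (Fin n × Fin n × Fin n) × (Fin n × Fin n × Fin n) :=
  (app3 (sel4 x.1) x.2.1, app3 (sel4 x.1) x.2.2)

def psi (p : (Fin n × Fin n × Fin n) × (Fin n × Fin n × Fin n)) :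
    (Fin n × Fin n × Fin n × Fin n) × ((Fin 4 × Fin 4 × Fin 4) × (Fin 4 × Fin 4 × Fin 4)) :=
  if h : (tset p.1 ∪ tset p.2).card = 4 then
    letI g := (tset p.1 ∪ tset p.2).orderIsoOfFin h
    ((g 0, g 1, g 2, g 3),
      ((g.symm ⟨p.1.1, Finset.mem_union_left _ (by simp [tset])⟩,
        g.symm ⟨p.1.2.1, Finset.mem_union_left _ (by simp [tset])⟩,
        g.symm ⟨p.1.2.2, Finset.mem_union_left _ (by simp [tset])⟩),
       (g.symm ⟨p.2.1, Finset.mem_union_right _ (by simp [tset])⟩,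
        g.symm ⟨p.2.2.1, Finset.mem_union_right _ (by simp [tset])⟩,
        g.symm ⟨p.2.2.2, Finset.mem_union_right _ (by simp [tset])⟩)))
  else ((p.1.1, p.1.1, p.1.1, p.1.1), ((0, 0, 0), (0, 0, 0)))

lemma card_union_of_mem_P2 {p : (Fin n × Fin n × Fin n) × (Fin n × Fin n × Fin n)}
    (hp : p ∈ ((T3 n) ×ˢ (T3 n)).filter (fun p => (tset p.1 ∩ tset p.2).card = 2)) :
    (tset p.1 ∪ tset p.2).card = 4 := by
  rw [Finset.mem_filter, Finset.mem_product] at hp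
  have := Finset.card_inter_add_card_union (tset p.1) (tset p.2)
  rw [card_tset hp.1.1, card_tset hp.1.2, hp.2] at this
  omega

lemma phi_psi {p : (Fin n × Fin n × Fin n) × (Fin n × Fin n × Fin n)}
    (hp : p ∈ ((T3 n) ×ˢ (T3 n)).filter (fun p => (tset p.1 ∩ tset p.2).card = 2)) :
    phi (psi p) = p := by
  have h4 := card_union_of_mem_P2 hp
  rw [psi, dif_pos h4]
  set g := (tset p.1 ∪ tset p.2).orderIsoOfFin h4 with hg
  have hsel : ∀ m : Fin 4, sel4 ((g 0 : Fin n), (g 1 : Fin n), (g 2 : Fin n), (g 3 : Fin n)) m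
      = (g m : Fin n) := by
    intro m
    fin_cases m <;> rfl
  show phi _ = p
  rw [phi]
  apply Prod.ext
  · show app3 _ _ = p.1
    apply Prod.ext
    · show sel4 _ (g.symm ⟨p.1.1, _⟩) = p.1.1
      rw [hsel, OrderIso.apply_symm_apply]
    · apply Prod.ext
      · show sel4 _ (g.symm ⟨p.1.2.1, _⟩) = p.1.2.1
        rw [hsel, OrderIso.apply_symm_apply]
      · show sel4 _ (g.symm ⟨p.1.2.2, _⟩) = p.1.2.2
        rw [hsel, OrderIso.apply_symm_apply]
  · apply Prod.ext
    · show sel4 _ (g.symm ⟨p.2.1, _⟩) = p.2.1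
      rw [hsel, OrderIso.apply_symm_apply]
    · apply Prod.ext
      · show sel4 _ (g.symm ⟨p.2.2.1, _⟩) = p.2.2.1
        rw [hsel, OrderIso.apply_symm_apply]
      · show sel4 _ (g.symm ⟨p.2.2.2, _⟩) = p.2.2.2
        rw [hsel, OrderIso.apply_symm_apply]

lemma share2_bij (f : ((Fin n × Fin n × Fin n) × (Fin n × Fin n × Fin n)) → ℚ) :
    ∑ p ∈ ((T3 n) ×ˢ (T3 n)).filter (fun p => (tset p.1 ∩ tset p.2).card = 2), f p
      = ∑ x ∈ (T4 n) ×ˢ Fcfg, f (phi x) := by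
  apply Finset.sum_nbij' psi phi
  · -- psi maps into T4 ×ˢ Fcfg
    intro p hp
    have h4 := card_union_of_mem_P2 hp
    rw [Finset.mem_filter, Finset.mem_product] at hp
    obtain ⟨⟨ht, hu⟩, hint⟩ := hp
    rw [mem_T3_iff] at ht hu
    rw [psi, dif_pos h4]
    set g := (tset p.1 ∪ tset p.2).orderIsoOfFin h4 with hg
    rw [Finset.mem_product]
    constructor
    · rw [mem_T4_iff]
      refine ⟨?_, ?_, ?_⟩ <;>
        exact Subtype.coe_lt_coe.mpr (g.lt_iff_lt.mpr (by decide))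
    · rw [Fcfg, Finset.mem_filter, Finset.mem_product]
      refine ⟨⟨?_, ?_⟩, ?_⟩
      · rw [mem_T3_iff]
        exact ⟨g.symm.lt_iff_lt.mpr (Subtype.mk_lt_mk.mpr ht.1),
          g.symm.lt_iff_lt.mpr (Subtype.mk_lt_mk.mpr ht.2)⟩
      · rw [mem_T3_iff]
        exact ⟨g.symm.lt_iff_lt.mpr (Subtype.mk_lt_mk.mpr hu.1),
          g.symm.lt_iff_lt.mpr (Subtype.mk_lt_mk.mpr hu.2)⟩
      · rw [Finset.eq_univ_iff_forall]
        intro y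
        have key : ∀ (z : Fin n) (hz : z ∈ tset p.1 ∪ tset p.2), (g y : Fin n) = z →
            g.symm ⟨z, hz⟩ = y := by
          intro z hz hzy
          rw [show (⟨z, hz⟩ : {a // a ∈ tset p.1 ∪ tset p.2}) = g y from Subtype.ext hzy.symm,
            OrderIso.symm_apply_apply]
        have hy := (g y).2
        rw [Finset.mem_union] at hy
        simp only [tset, Finset.mem_union, Finset.mem_insert, Finset.mem_singleton]
        rcases hy with h | h <;>
          simp only [tset, Finset.mem_insert, Finset.mem_singleton] at h <;>
          rcases h with h | h | h
        · exact Or.inl (Or.inl (key _ _ h).symm)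
        · exact Or.inl (Or.inr (Or.inl (key _ _ h).symm))
        · exact Or.inl (Or.inr (Or.inr (key _ _ h).symm))
        · exact Or.inr (Or.inl (key _ _ h).symm)
        · exact Or.inr (Or.inr (Or.inl (key _ _ h).symm))
        · exact Or.inr (Or.inr (Or.inr (key _ _ h).symm))
  · -- phi maps into P2
    intro x hx
    rw [Finset.mem_product] at hx
    obtain ⟨hq, hAB⟩ := hx
    rw [Fcfg, Finset.mem_filter, Finset.mem_product] at hAB
    obtain ⟨⟨hA, hB⟩, huniv⟩ := hAB
    have hinj := (sel4_strictMono hq).injective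
    rw [Finset.mem_filter, Finset.mem_product]
    refine ⟨⟨?_, ?_⟩, ?_⟩
    · rw [mem_T3_iff] at hA ⊢
      exact ⟨(sel4_strictMono hq) hA.1, (sel4_strictMono hq) hA.2⟩
    · rw [mem_T3_iff] at hB ⊢
      exact ⟨(sel4_strictMono hq) hB.1, (sel4_strictMono hq) hB.2⟩
    · show (tset (app3 (sel4 x.1) x.2.1) ∩ tset (app3 (sel4 x.1) x.2.2)).card = 2
      rw [tset_app3, tset_app3, ← Finset.image_inter _ _ hinj,
        Finset.card_image_of_injective _ hinj]
      have := Finset.card_inter_add_card_union (tset x.2.1) (tset x.2.2)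
      rw [card_tset hA, card_tset hB, huniv, Finset.card_univ, Fintype.card_fin] at this
      omega
  · -- left inverse
    exact fun p hp => phi_psi hp
  · -- right inverse
    intro x hx
    rw [Finset.mem_product] at hx
    obtain ⟨hq, hAB⟩ := hx
    rw [Fcfg, Finset.mem_filter, Finset.mem_product] at hAB
    obtain ⟨⟨hA, hB⟩, huniv⟩ := hAB
    have hinj := (sel4_strictMono hq).injective
    have himg : tset (app3 (sel4 x.1) x.2.1) ∪ tset (app3 (sel4 x.1) x.2.2)
        = Finset.image (sel4 x.1) Finset.univ := by
      rw [tset_app3, tset_app3, ← Finset.image_union, huniv]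
    have h4' : (tset (app3 (sel4 x.1) x.2.1) ∪ tset (app3 (sel4 x.1) x.2.2)).card = 4 := by
      rw [himg, Finset.card_image_of_injective _ hinj, Finset.card_univ, Fintype.card_fin]
    have h4'' : (tset (phi x).1 ∪ tset (phi x).2).card = 4 := h4'
    show psi (phi x) = x
    rw [psi]
    rw [dif_pos h4'']
    set g' := (tset (phi x).1 ∪ tset (phi x).2).orderIsoOfFin h4'' with hg'
    have huniq : sel4 x.1 = ⇑((tset (phi x).1 ∪ tset (phi x).2).orderEmbOfFin h4'') :=
      Finset.orderEmbOfFin_unique h4''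
        (fun m => by
          show sel4 x.1 m ∈ _
          rw [show tset (phi x).1 ∪ tset (phi x).2
            = tset (app3 (sel4 x.1) x.2.1) ∪ tset (app3 (sel4 x.1) x.2.2) from rfl, himg]
          exact Finset.mem_image_of_mem _ (Finset.mem_univ m))
        (sel4_strictMono hq)
    have hcoe : ∀ m : Fin 4, (g' m : Fin n) = sel4 x.1 m := by
      intro m
      rw [hg', Finset.coe_orderIsoOfFin_apply, ← huniq]
    have hsymm : ∀ (m : Fin 4) (z : Fin n) (hz : z ∈ tset (phi x).1 ∪ tset (phi x).2),
        z = sel4 x.1 m → g'.symm ⟨z, hz⟩ = m := by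
      intro m z hz hzm
      rw [show (⟨z, hz⟩ : {a // a ∈ tset (phi x).1 ∪ tset (phi x).2}) = g' m from
        Subtype.ext (by rw [hcoe]; exact hzm), OrderIso.symm_apply_apply]
    refine Prod.ext ?_ (Prod.ext (Prod.ext ?_ (Prod.ext ?_ ?_)) (Prod.ext ?_ (Prod.ext ?_ ?_)))
    · refine Prod.ext ?_ (Prod.ext ?_ (Prod.ext ?_ ?_)) <;>
        · show (g' _ : Fin n) = _
          rw [hcoe]
          rfl
    · exact hsymm _ _ _ rfl
    · exact hsymm _ _ _ rfl
    · exact hsymm _ _ _ rfl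
    · exact hsymm _ _ _ rfl
    · exact hsymm _ _ _ rfl
    · exact hsymm _ _ _ rfl
  · -- summand transport
    intro p hp
    rw [phi_psi hp]

def qset (q : Fin n × Fin n × Fin n × Fin n) : Finset (Fin n) :=
  {q.1, q.2.1, q.2.2.1, q.2.2.2}
lemma card_T3 : (T3 n).card = n.choose 3 := by
  have h : (Finset.powersetCard 3 (univ : Finset (Fin n))).card = n.choose 3 := by
    rw [Finset.card_powersetCard, Finset.card_univ, Fintype.card_fin]
  rw [← h]
  apply Finset.card_bij (fun t _ => tset t)
  · -- maps into powersetCard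
    intro t ht
    rw [Finset.mem_powersetCard]
    refine ⟨Finset.subset_univ _, ?_⟩
    rw [mem_T3_iff] at ht
    rw [tset]
    rw [Finset.card_insert_of_notMem, Finset.card_insert_of_notMem, Finset.card_singleton]
    · simp only [Finset.mem_singleton]
      exact ne_of_lt ht.2
    · simp only [Finset.mem_insert, Finset.mem_singleton]
      push_neg
      exact ⟨ne_of_lt ht.1, ne_of_lt (ht.1.trans ht.2)⟩
  · -- injective
    intro t ht u hu h
    obtain ⟨a, b, c⟩ := t
    obtain ⟨d, e, f⟩ := u
    rw [mem_T3_iff] at ht hu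
    have m1 : a ∈ tset (d, e, f) := h ▸ (by simp [tset])
    have m2 : b ∈ tset (d, e, f) := h ▸ (by simp [tset])
    have m3 : c ∈ tset (d, e, f) := h ▸ (by simp [tset])
    have m4 : d ∈ tset (a, b, c) := h ▸ (by simp [tset])
    have m5 : e ∈ tset (a, b, c) := h ▸ (by simp [tset])
    have m6 : f ∈ tset (a, b, c) := h ▸ (by simp [tset])
    simp only [tset, mem_insert, mem_singleton] at m1 m2 m3 m4 m5 m6
    simp only [Prod.mk.injEq]
    simp only [Fin.ext_iff, Fin.lt_def] at *
    omega
  · -- surjective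
    intro s hs
    rw [Finset.mem_powersetCard] at hs
    set g := s.orderEmbOfFin hs.2 with hg
    refine ⟨(g 0, g 1, g 2), ?_, ?_⟩
    · rw [mem_T3_iff]
      exact ⟨g.strictMono (by decide), g.strictMono (by decide)⟩
    · -- tset = s
      apply Finset.eq_of_subset_of_card_le
      · intro x hx
        simp only [tset, mem_insert, mem_singleton] at hx
        rcases hx with h | h | h <;> subst h <;> exact Finset.orderEmbOfFin_mem s hs.2 _
      · rw [hs.2]
        rw [tset]
        rw [Finset.card_insert_of_notMem, Finset.card_insert_of_notMem, Finset.card_singleton]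
        · simp only [Finset.mem_singleton]
          exact ne_of_lt (g.strictMono (by decide))
        · simp only [Finset.mem_insert, Finset.mem_singleton]
          push_neg
          exact ⟨ne_of_lt (g.strictMono (by decide)), ne_of_lt (g.strictMono (by decide))⟩

lemma qset_card {q : Fin n × Fin n × Fin n × Fin n} (h : q ∈ T4 n) : (qset q).card = 4 := by
  rw [mem_T4_iff] at h
  obtain ⟨h1, h2, h3⟩ := h
  rw [qset]
  rw [Finset.card_insert_of_notMem, Finset.card_insert_of_notMem,
    Finset.card_insert_of_notMem, Finset.card_singleton]
  · simp only [Finset.mem_singleton]; exact ne_of_lt h3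
  · simp only [Finset.mem_insert, Finset.mem_singleton]; push_neg
    exact ⟨ne_of_lt h2, ne_of_lt (h2.trans h3)⟩
  · simp only [Finset.mem_insert, Finset.mem_singleton]; push_neg
    exact ⟨ne_of_lt h1, ne_of_lt (h1.trans h2), ne_of_lt ((h1.trans h2).trans h3)⟩

lemma card_T4 : (T4 n).card = n.choose 4 := by
  have h : (Finset.powersetCard 4 (univ : Finset (Fin n))).card = n.choose 4 := by
    rw [Finset.card_powersetCard, Finset.card_univ, Fintype.card_fin]
  rw [← h]
  apply Finset.card_bij (fun q _ => qset q)
  · intro q hq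
    rw [Finset.mem_powersetCard]
    exact ⟨Finset.subset_univ _, qset_card hq⟩
  · intro t ht u hu h
    obtain ⟨a, b, c, d⟩ := t
    obtain ⟨a', b', c', d'⟩ := u
    rw [mem_T4_iff] at ht hu
    have m1 : a ∈ qset (a', b', c', d') := h ▸ (by simp [qset])
    have m2 : b ∈ qset (a', b', c', d') := h ▸ (by simp [qset])
    have m3 : c ∈ qset (a', b', c', d') := h ▸ (by simp [qset])
    have m4 : d ∈ qset (a', b', c', d') := h ▸ (by simp [qset])
    have m5 : a' ∈ qset (a, b, c, d) := h ▸ (by simp [qset])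
    have m6 : b' ∈ qset (a, b, c, d) := h ▸ (by simp [qset])
    have m7 : c' ∈ qset (a, b, c, d) := h ▸ (by simp [qset])
    have m8 : d' ∈ qset (a, b, c, d) := h ▸ (by simp [qset])
    simp only [qset, mem_insert, mem_singleton] at m1 m2 m3 m4 m5 m6 m7 m8
    simp only [Prod.mk.injEq]
    simp only [Fin.ext_iff, Fin.lt_def] at *
    omega
  · intro s hs
    rw [Finset.mem_powersetCard] at hs
    set g := s.orderEmbOfFin hs.2 with hg
    refine ⟨(g 0, g 1, g 2, g 3), ?_, ?_⟩
    · rw [mem_T4_iff]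
      exact ⟨g.strictMono (by decide), g.strictMono (by decide), g.strictMono (by decide)⟩
    · apply Finset.eq_of_subset_of_card_le
      · intro x hx
        simp only [qset, mem_insert, mem_singleton] at hx
        rcases hx with h | h | h | h <;> subst h <;> exact Finset.orderEmbOfFin_mem s hs.2 _
      · rw [hs.2]
        have : (g 0, g 1, g 2, g 3) ∈ T4 n := by
          rw [mem_T4_iff]
          exact ⟨g.strictMono (by decide), g.strictMono (by decide), g.strictMono (by decide)⟩
        rw [qset_card this]

lemma sorted_eq_of_tset_eq {t u : Fin n × Fin n × Fin n} (ht : t ∈ T3 n) (hu : u ∈ T3 n)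
    (h : tset t = tset u) : t = u := by
  obtain ⟨a, b, c⟩ := t
  obtain ⟨d, e, f⟩ := u
  rw [mem_T3_iff] at ht hu
  have m1 : a ∈ tset (d, e, f) := h ▸ (by simp [tset])
  have m2 : b ∈ tset (d, e, f) := h ▸ (by simp [tset])
  have m3 : c ∈ tset (d, e, f) := h ▸ (by simp [tset])
  have m4 : d ∈ tset (a, b, c) := h ▸ (by simp [tset])
  have m5 : e ∈ tset (a, b, c) := h ▸ (by simp [tset])
  have m6 : f ∈ tset (a, b, c) := h ▸ (by simp [tset])
  simp only [tset, Finset.mem_insert, Finset.mem_singleton] at m1 m2 m3 m4 m5 m6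
  simp only [Prod.mk.injEq]
  simp only [Fin.ext_iff, Fin.lt_def] at *
  omega

def sgp {n : ℕ} (π : Equiv.Perm (Fin n)) (t : Fin n × Fin n × Fin n) : ℚ :=
  GVsg (π t.1) (π t.2.1) (π t.2.2)
lemma GVsg_swap_mem {N : ℕ} {a b c p q : Fin N} (hab : a ≠ b) (hac : a ≠ c) (hbc : b ≠ c)
    (hp : p = a ∨ p = b ∨ p = c) (hq : q = a ∨ q = b ∨ q = c) (hpq : p ≠ q)
    (π : Equiv.Perm (Fin N)) :
    GVsg (π (Equiv.swap p q a)) (π (Equiv.swap p q b)) (π (Equiv.swap p q c))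
      = -GVsg (π a) (π b) (π c) := by
  have vab : π a ≠ π b := fun h => hab (π.injective h)
  have vac : π a ≠ π c := fun h => hac (π.injective h)
  have vbc : π b ≠ π c := fun h => hbc (π.injective h)
  rcases hp with rfl | rfl | rfl <;> rcases hq with rfl | rfl | rfl <;>
    first
      | exact absurd rfl hpq
      | skip
  · rw [Equiv.swap_apply_left, Equiv.swap_apply_right,
      Equiv.swap_apply_of_ne_of_ne hac.symm hbc.symm]
    exact GVsg_swap12 vab vac vbc
  · rw [Equiv.swap_apply_left, Equiv.swap_apply_right,
      Equiv.swap_apply_of_ne_of_ne hab.symm hbc]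
    exact GVsg_swap13 vab vac vbc
  · rw [Equiv.swap_comm, Equiv.swap_apply_left, Equiv.swap_apply_right,
      Equiv.swap_apply_of_ne_of_ne hac.symm hbc.symm]
    exact GVsg_swap12 vab vac vbc
  · rw [Equiv.swap_apply_left, Equiv.swap_apply_right,
      Equiv.swap_apply_of_ne_of_ne hab hac]
    exact GVsg_swap23 vab vac vbc
  · rw [Equiv.swap_comm, Equiv.swap_apply_left, Equiv.swap_apply_right,
      Equiv.swap_apply_of_ne_of_ne hab.symm hbc]
    exact GVsg_swap13 vab vac vbc
  · rw [Equiv.swap_comm, Equiv.swap_apply_left, Equiv.swap_apply_right,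
      Equiv.swap_apply_of_ne_of_ne hab hac]
    exact GVsg_swap23 vab vac vbc

lemma W_zero {t u : Fin n × Fin n × Fin n} (hu : u ∈ T3 n)
    (h2 : 2 ≤ (tset u \ tset t).card) :
    ∑ π : Equiv.Perm (Fin n), sgp π t * sgp π u = 0 := by
  obtain ⟨p, hp, q, hq, hpq⟩ := Finset.one_lt_card.mp (by omega : 1 < (tset u \ tset t).card)
  rw [Finset.mem_sdiff] at hp hq
  set s := Equiv.swap p q with hs
  have hres : ∀ x, x ∈ tset t → s x = x := by
    intro x hx
    exact Equiv.swap_apply_of_ne_of_ne (fun h => hp.2 (h ▸ hx)) (fun h => hq.2 (h ▸ hx))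
  -- distinctness of u's positions
  rw [mem_T3_iff] at hu
  have d12 : u.1 ≠ u.2.1 := ne_of_lt hu.1
  have d13 : u.1 ≠ u.2.2 := ne_of_lt (hu.1.trans hu.2)
  have d23 : u.2.1 ≠ u.2.2 := ne_of_lt hu.2
  have key : ∀ π : Equiv.Perm (Fin n), sgp (π * s) t * sgp (π * s) u = -(sgp π t * sgp π u) := by
    intro π
    have ht' : sgp (π * s) t = sgp π t := by
      unfold sgp
      rw [Equiv.Perm.mul_apply, Equiv.Perm.mul_apply, Equiv.Perm.mul_apply,
        hres t.1 (by simp [tset]), hres t.2.1 (by simp [tset]), hres t.2.2 (by simp [tset])]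
    have vd12 : π u.1 ≠ π u.2.1 := fun h => d12 (π.injective h)
    have vd13 : π u.1 ≠ π u.2.2 := fun h => d13 (π.injective h)
    have vd23 : π u.2.1 ≠ π u.2.2 := fun h => d23 (π.injective h)
    have hu' : sgp (π * s) u = -sgp π u := by
      unfold sgp
      simp only [Equiv.Perm.mul_apply]
      simp only [tset, mem_insert, mem_singleton] at hp hq
      exact GVsg_swap_mem d12 d13 d23 hp.1 hq.1 hpq π
    rw [ht', hu']
    ring
  have hre : ∑ π : Equiv.Perm (Fin n), sgp π t * sgp π u
      = ∑ π : Equiv.Perm (Fin n), sgp (π * s) t * sgp (π * s) u :=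
    Fintype.sum_equiv (Equiv.mulRight s).symm _ _ (fun π => by simp)
  have : ∑ π : Equiv.Perm (Fin n), sgp π t * sgp π u
      = -∑ π : Equiv.Perm (Fin n), sgp π t * sgp π u := by
    nth_rewrite 1 [hre]
    rw [Finset.sum_congr rfl (fun π _ => key π), Finset.sum_neg_distrib]
  linarith


lemma W_diag {n : ℕ} {t : Fin n × Fin n × Fin n} :
    ∑ π : Equiv.Perm (Fin n), sgp π t * sgp π t = (n.factorial : ℚ) := by
  have h1 : ∀ π : Equiv.Perm (Fin n), sgp π t * sgp π t = 1 := fun π => GVsg_mul_self _ _ _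
  rw [Finset.sum_congr rfl (fun π _ => h1 π), Finset.sum_const, nsmul_eq_mul,
    Finset.card_univ, Fintype.card_perm, Fintype.card_fin, mul_one]

def Wfun {n : ℕ} (p : (Fin n × Fin n × Fin n) × (Fin n × Fin n × Fin n)) : ℚ :=
  ∑ π : Equiv.Perm (Fin n), sgp π p.1 * sgp π p.2

def Mcfg (AB : (Fin 4 × Fin 4 × Fin 4) × (Fin 4 × Fin 4 × Fin 4)) : ℚ :=
  ∑ σ : Equiv.Perm (Fin 4),
    GVsg (σ AB.1.1) (σ AB.1.2.1) (σ AB.1.2.2) * GVsg (σ AB.2.1) (σ AB.2.2.1) (σ AB.2.2.2)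

lemma W_share2 {n : ℕ} {q : Fin n × Fin n × Fin n × Fin n}
    {AB : (Fin 4 × Fin 4 × Fin 4) × (Fin 4 × Fin 4 × Fin 4)} (hq : q ∈ T4 n) :
    (24 : ℚ) * Wfun (phi (q, AB)) = (n.factorial : ℚ) * Mcfg AB := by
  have H : ∀ (σ : Equiv.Perm (Fin 4)) (v : Fin 4 → Fin n), Function.Injective v →
      (∀ x y, σ x < σ y ↔ v x < v y) →
      (GVsg (v AB.1.1) (v AB.1.2.1) (v AB.1.2.2) * GVsg (v AB.2.1) (v AB.2.2.1) (v AB.2.2.2)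
        : ℚ)
        = GVsg (σ AB.1.1) (σ AB.1.2.1) (σ AB.1.2.2)
            * GVsg (σ AB.2.1) (σ AB.2.2.1) (σ AB.2.2.2) := by
    intro σ v hvinj hcmp
    have hP : ∀ a b c : Fin 4, GVsg (v a) (v b) (v c) = GVsg (σ a) (σ b) (σ c) := by
      intro a b c
      have hiff : GVPat (v a) (v b) (v c) ↔ GVPat (σ a) (σ b) (σ c) := by
        unfold GVPat
        simp only [← hcmp]
      unfold GVsg
      rw [if_congr hiff rfl rfl]
    rw [hP, hP]
  have key := GV.master (sel4 q) (sel4_strictMono hq).injective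
    (fun v => GVsg (v AB.1.1) (v AB.1.2.1) (v AB.1.2.2)
      * GVsg (v AB.2.1) (v AB.2.2.1) (v AB.2.2.2))
    (fun f => GVsg (f AB.1.1) (f AB.1.2.1) (f AB.1.2.2)
      * GVsg (f AB.2.1) (f AB.2.2.1) (f AB.2.2.2))
    H
  have h24 : ((Nat.factorial 4 : ℕ) : ℚ) = 24 := by norm_num [Nat.factorial]
  rw [h24] at key
  rw [show Wfun (phi (q, AB)) = ∑ π : Equiv.Perm (Fin n),
      GVsg (π (sel4 q AB.1.1)) (π (sel4 q AB.1.2.1)) (π (sel4 q AB.1.2.2))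
        * GVsg (π (sel4 q AB.2.1)) (π (sel4 q AB.2.2.1)) (π (sel4 q AB.2.2.2)) from rfl]
  rw [show Mcfg AB = ∑ σ : Equiv.Perm (Fin 4),
      GVsg (σ AB.1.1) (σ AB.1.2.1) (σ AB.1.2.2)
        * GVsg (σ AB.2.1) (σ AB.2.2.1) (σ AB.2.2.2) from rfl]
  exact key

def GVsgz' {N : ℕ} (a b c : Fin N) : ℤ := if GVPat a b c then -1 else 1

lemma sum_perm_eq_sum_bij (h : (Fin 4 → Fin 4) → ℚ) :
    ∑ σ : Equiv.Perm (Fin 4), h ⇑σ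
      = ∑ f ∈ (univ : Finset (Fin 4 → Fin 4)).filter Function.Bijective, h f := by
  apply Finset.sum_bij (fun (σ : Equiv.Perm (Fin 4)) _ => ⇑σ)
  · intro σ _
    rw [Finset.mem_filter]
    exact ⟨mem_univ _, σ.bijective⟩
  · intro σ _ τ _ hστ
    exact Equiv.coe_fn_injective hστ
  · intro f hf
    rw [Finset.mem_filter] at hf
    exact ⟨Equiv.ofBijective f hf.2, mem_univ _, rfl⟩
  · intro σ _
    rfl

set_option maxRecDepth 100000 in
lemma Mcfg_sum : ∑ AB ∈ Fcfg, Mcfg AB = 32 := by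
  have step1 : ∀ AB, Mcfg AB
      = ∑ f ∈ (univ : Finset (Fin 4 → Fin 4)).filter Function.Bijective,
          ((GVsgz (f AB.1.1) (f AB.1.2.1) (f AB.1.2.2)
            * GVsgz (f AB.2.1) (f AB.2.2.1) (f AB.2.2.2) : ℤ) : ℚ) := by
    intro AB
    rw [Mcfg, sum_perm_eq_sum_bij (fun f =>
      GVsg (f AB.1.1) (f AB.1.2.1) (f AB.1.2.2)
        * GVsg (f AB.2.1) (f AB.2.2.1) (f AB.2.2.2))]
    refine Finset.sum_congr rfl (fun f _ => ?_)
    rw [GVsg_eq_cast, GVsg_eq_cast]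
    push_cast
    ring
  rw [Finset.sum_congr rfl (fun AB _ => step1 AB)]
  have hz : (∑ AB ∈ Fcfg, ∑ f ∈ (univ : Finset (Fin 4 → Fin 4)).filter Function.Bijective,
      (GVsgz (f AB.1.1) (f AB.1.2.1) (f AB.1.2.2)
        * GVsgz (f AB.2.1) (f AB.2.2.1) (f AB.2.2.2) : ℤ)) = 32 := by decide
  exact_mod_cast hz
lemma card_diag_filter {n : ℕ} :
    (((T3 n) ×ˢ (T3 n)).filter (fun p => p.1 = p.2)).card = (T3 n).card := by
  apply Finset.card_nbij' (fun p => p.1) (fun t => (t, t))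
  · intro p hp
    rw [Finset.mem_coe, Finset.mem_filter, Finset.mem_product] at hp
    exact hp.1.1
  · intro t ht
    rw [Finset.mem_coe, Finset.mem_filter, Finset.mem_product]
    exact ⟨⟨ht, ht⟩, rfl⟩
  · intro p hp
    rw [Finset.mem_coe, Finset.mem_filter] at hp
    exact Prod.ext rfl hp.2
  · intro t _
    rfl

theorem gep_perm_variance (n : ℕ) (hn : 1 ≤ n) :
    (∑ π : Equiv.Perm (Fin n),
        ((gep (fun i => π i) : ℚ) - (n : ℚ) * ((n : ℚ) - 1) * ((n : ℚ) - 2) / 12) ^ 2)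
      / (n.factorial : ℚ) =
      (n : ℚ) ^ 2 * ((n : ℚ) - 1) * ((n : ℚ) - 2) / 72 := by
  classical
  have hfac : (n.factorial : ℚ) ≠ 0 := Nat.cast_ne_zero.mpr (Nat.factorial_ne_zero n)
  have hC3 : (((T3 n).card : ℕ) : ℚ) = (n:ℚ)*((n:ℚ)-1)*((n:ℚ)-2)/6 := by
    rw [card_T3]; exact choose3_cast n
  have hC4 : (((T4 n).card : ℕ) : ℚ) = (n:ℚ)*((n:ℚ)-1)*((n:ℚ)-2)*((n:ℚ)-3)/24 := by
    rw [card_T4]; exact choose4_cast n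
  -- Step 1: rewrite gep in terms of signs
  have hgep : ∀ π : Equiv.Perm (Fin n), (gep (fun i => π i) : ℚ)
      = ∑ t ∈ T3 n, (1 - sgp π t)/2 := by
    intro π
    have hset : (Finset.univ.filter (fun t : Fin n × Fin n × Fin n =>
        t.1 < t.2.1 ∧ t.2.1 < t.2.2 ∧
          ((π t.1 < π t.2.2 ∧ π t.2.2 < π t.2.1) ∨
           (π t.2.1 < π t.1 ∧ π t.1 < π t.2.2) ∨
           (π t.2.2 < π t.2.1 ∧ π t.2.1 < π t.1))))
        = (T3 n).filter (fun t => GVPat (π t.1) (π t.2.1) (π t.2.2)) := by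
      rw [T3, Finset.filter_filter]
      apply Finset.filter_congr
      intro t _
      simp only [GVPat]
      tauto
    have hind : ∀ t : Fin n × Fin n × Fin n,
        ((if GVPat (π t.1) (π t.2.1) (π t.2.2) then (1:ℕ) else 0 : ℕ) : ℚ)
          = (1 - sgp π t)/2 := by
      intro t
      unfold sgp GVsg
      split <;> norm_num
    rw [gep, hset, Finset.card_filter, Nat.cast_sum]
    exact Finset.sum_congr rfl (fun t _ => hind t)
  -- Step 2: centered value
  have hcent : ∀ π : Equiv.Perm (Fin n),
      (gep (fun i => π i) : ℚ) - (n : ℚ) * ((n : ℚ) - 1) * ((n : ℚ) - 2) / 12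
        = -(1/2) * ∑ t ∈ T3 n, sgp π t := by
    intro π
    rw [hgep π]
    have expand : ∑ t ∈ T3 n, (1 - sgp π t)/2
        = ((((T3 n).card : ℕ) : ℚ) - ∑ t ∈ T3 n, sgp π t)/2 := by
      rw [← Finset.sum_div, Finset.sum_sub_distrib, Finset.sum_const, nsmul_eq_mul, mul_one]
    rw [expand, hC3]
    ring
  -- Step 3: square
  have hsq : ∀ π : Equiv.Perm (Fin n),
      ((gep (fun i => π i) : ℚ) - (n : ℚ) * ((n : ℚ) - 1) * ((n : ℚ) - 2) / 12) ^ 2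
        = (1/4) * ∑ p ∈ (T3 n) ×ˢ (T3 n), sgp π p.1 * sgp π p.2 := by
    intro π
    rw [hcent π, Finset.sum_product' (T3 n) (T3 n) (fun a b => sgp π a * sgp π b),
      ← Finset.sum_mul_sum]
    ring
  -- Step 4: exchange sums
  have hexch : (∑ π : Equiv.Perm (Fin n),
      ((gep (fun i => π i) : ℚ) - (n : ℚ) * ((n : ℚ) - 1) * ((n : ℚ) - 2) / 12) ^ 2)
      = (1/4) * ∑ p ∈ (T3 n) ×ˢ (T3 n), Wfun p := by
    rw [Finset.sum_congr rfl (fun π _ => hsq π), ← Finset.mul_sum]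
    congr 1
    rw [Finset.sum_comm]
    rfl
  -- Step 5: evaluate the big sum
  have hzero : ∑ p ∈ (((T3 n) ×ˢ (T3 n)).filter (fun p => ¬ p.1 = p.2)).filter
      (fun p => ¬ (tset p.1 ∩ tset p.2).card = 2), Wfun p = 0 := by
    apply Finset.sum_eq_zero
    intro p hp
    rw [Finset.mem_filter, Finset.mem_filter, Finset.mem_product] at hp
    obtain ⟨⟨⟨ht, hu⟩, hne⟩, hc2⟩ := hp
    have hint : (tset p.1 ∩ tset p.2).card ≤ 1 := by
      rcases Nat.lt_or_ge (tset p.1 ∩ tset p.2).card 2 with h | h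
      · omega
      · exfalso
        have hle3 : (tset p.1 ∩ tset p.2).card ≤ 3 := by
          have := Finset.card_le_card
            (Finset.inter_subset_right : tset p.1 ∩ tset p.2 ⊆ tset p.2)
          rw [card_tset hu] at this
          exact this
        have h3 : (tset p.1 ∩ tset p.2).card = 3 := by omega
        have heq1 : tset p.1 ∩ tset p.2 = tset p.2 :=
          Finset.eq_of_subset_of_card_le Finset.inter_subset_right
            (by rw [card_tset hu, h3])
        have hsub : tset p.2 ⊆ tset p.1 := by
          rw [← heq1]
          exact Finset.inter_subset_left
        have heq2 : tset p.1 = tset p.2 :=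
          (Finset.eq_of_subset_of_card_le hsub (by rw [card_tset hu, card_tset ht])).symm
        exact hne (sorted_eq_of_tset_eq ht hu heq2)
    apply W_zero hu
    have := Finset.card_inter_add_card_sdiff (tset p.2) (tset p.1)
    rw [card_tset hu, Finset.inter_comm] at this
    omega
  have hfilt : (((T3 n) ×ˢ (T3 n)).filter (fun p => ¬ p.1 = p.2)).filter
      (fun p => (tset p.1 ∩ tset p.2).card = 2)
      = ((T3 n) ×ˢ (T3 n)).filter (fun p => (tset p.1 ∩ tset p.2).card = 2) := by
    rw [Finset.filter_filter]
    apply Finset.filter_congr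
    intro p hp
    rw [Finset.mem_product] at hp
    constructor
    · tauto
    · intro h2
      refine ⟨fun heq => ?_, h2⟩
      rw [← heq, Finset.inter_self, card_tset hp.1] at h2
      omega
  have hdiag : ∑ p ∈ ((T3 n) ×ˢ (T3 n)).filter (fun p => p.1 = p.2), Wfun p
      = (((T3 n).card : ℕ) : ℚ) * (n.factorial : ℚ) := by
    have hconst : ∀ p ∈ ((T3 n) ×ˢ (T3 n)).filter (fun p => p.1 = p.2),
        Wfun p = (n.factorial : ℚ) := by
      intro p hp
      rw [Finset.mem_filter] at hp
      rw [Wfun, ← hp.2]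
      exact W_diag
    rw [Finset.sum_congr rfl hconst, Finset.sum_const, nsmul_eq_mul, card_diag_filter]
  have hshare2 : ∑ p ∈ ((T3 n) ×ˢ (T3 n)).filter
      (fun p => (tset p.1 ∩ tset p.2).card = 2), Wfun p
      = (((T4 n).card : ℕ) : ℚ) * ((n.factorial : ℚ) * 32 / 24) := by
    rw [share2_bij Wfun, Finset.sum_product' (T4 n) Fcfg (fun q AB => Wfun (phi (q, AB)))]
    have hinner : ∀ q ∈ T4 n, ∑ AB ∈ Fcfg, Wfun (phi (q, AB))
        = (n.factorial : ℚ) * 32 / 24 := by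
      intro q hq
      have hW : ∀ AB, Wfun (phi (q, AB)) = (n.factorial : ℚ) * Mcfg AB / 24 := by
        intro AB
        have := W_share2 (AB := AB) hq
        linarith
      rw [Finset.sum_congr rfl (fun AB _ => hW AB)]
      rw [show (∑ AB ∈ Fcfg, (n.factorial : ℚ) * Mcfg AB / 24)
        = (n.factorial : ℚ) * (∑ AB ∈ Fcfg, Mcfg AB) / 24 by
          rw [Finset.mul_sum, Finset.sum_div]]
      rw [Mcfg_sum]
    rw [Finset.sum_congr rfl hinner, Finset.sum_const, nsmul_eq_mul]
  have hbig : ∑ p ∈ (T3 n) ×ˢ (T3 n), Wfun p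
      = (((T3 n).card : ℕ) : ℚ) * (n.factorial : ℚ)
        + (((T4 n).card : ℕ) : ℚ) * ((n.factorial : ℚ) * 32 / 24) := by
    rw [← Finset.sum_filter_add_sum_filter_not ((T3 n) ×ˢ (T3 n)) (fun p => p.1 = p.2) Wfun]
    rw [hdiag]
    rw [← Finset.sum_filter_add_sum_filter_not
      (((T3 n) ×ˢ (T3 n)).filter (fun p => ¬ p.1 = p.2))
      (fun p => (tset p.1 ∩ tset p.2).card = 2) Wfun]
    rw [hzero, hfilt, hshare2]
    ring
  rw [hexch, hbig, hC3, hC4]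
  field_simp
  ring
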